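/- Let λ ≥ 1 and let M be an n×n real symmetric positive definite matrix with I ⪯ M ⪯ λ·I (all eigenvalues of M lie in [1, λ]). Then for every index j ∈ {1,…,n}, ln det M − ln det M[{1,…,n}∖{j}, {1,…,n}∖{j}] ≥ (1/λ)·ln M_{jj}. Consequently, the set function f(S) = ln det M[S,S] has total curvature at most 1 − 1/λ. -/

import Mathlib

section Aux
open Matrix

private lemma stmt18_scalar {lam d p : ℝ} (hlam : 1 ≤ lam) (hd1 : 1 ≤ d)
    (hp : 0 < p) (hkey : lam * p ≤ lam + 1 - d) :
    (1 / lam) * Real.log d ≤ - Real.log p := by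
  have hlam0 : 0 < lam := by linarith
  have hd0 : 0 < d := by linarith
  have hlogd : Real.log d ≤ d - 1 := Real.log_le_sub_one_of_pos hd0
  have hexp : 1 - Real.log d / lam ≤ Real.exp (-(Real.log d / lam)) := by
    have := Real.add_one_le_exp (-(Real.log d / lam)); linarith
  have hstep : p ≤ Real.exp (-(Real.log d / lam)) := by
    have h1 : p ≤ (lam + 1 - d) / lam := by rw [le_div_iff₀ hlam0]; linarith
    have h2 : (lam + 1 - d) / lam ≤ (lam - Real.log d) / lam :=
      (div_le_div_iff_of_pos_right hlam0).mpr (by linarith)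
    have h3 : (lam - Real.log d) / lam = 1 - Real.log d / lam := by field_simp
    calc p ≤ (lam + 1 - d) / lam := h1
    _ ≤ (lam - Real.log d) / lam := h2
    _ = 1 - Real.log d / lam := h3
    _ ≤ _ := hexp
  have hlog := Real.log_le_log hp hstep
  rw [Real.log_exp] at hlog
  have : Real.log d / lam ≤ - Real.log p := by linarith
  calc (1/lam) * Real.log d = Real.log d / lam := by ring
  _ ≤ - Real.log p := this

private lemma stmt18_psd {n : ℕ} (lam : ℝ)
    (M : Matrix (Fin n) (Fin n) ℝ) (hpd : M.PosDef)
    (h1 : (M - 1).PosSemidef)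
    (h2 : (lam • (1 : Matrix (Fin n) (Fin n) ℝ) - M).PosSemidef) :
    ((lam + 1) • (1 : Matrix (Fin n) (Fin n) ℝ) - M - lam • M⁻¹).PosSemidef := by
  have hM := hpd.isHermitian
  set U : Matrix (Fin n) (Fin n) ℝ := (hM.eigenvectorUnitary : Matrix (Fin n) (Fin n) ℝ) with hU
  set ev : Fin n → ℝ := hM.eigenvalues with hev
  have hUU : star U * U = 1 := Matrix.mem_unitaryGroup_iff'.mp (hM.eigenvectorUnitary).2
  have hUU' : U * star U = 1 := Matrix.mem_unitaryGroup_iff.mp (hM.eigenvectorUnitary).2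
  have hdiag : star U * M * U = Matrix.diagonal ev := by
    simpa using hM.conjStarAlgAut_star_eigenvectorUnitary
  have hspec : M = U * Matrix.diagonal ev * star U := by
    calc M = (U * star U) * M * (U * star U) := by rw [hUU']; simp
    _ = U * (star U * M * U) * star U := by simp only [Matrix.mul_assoc]
    _ = U * Matrix.diagonal ev * star U := by rw [hdiag]
  have hev0 : ∀ i, 0 < ev i := fun i => hpd.eigenvalues_pos i
  have hev1 : ∀ i, 1 ≤ ev i := by
    intro i
    have hps : (Uᴴ * (M - 1) * U).PosSemidef := h1.conjTranspose_mul_mul_same U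
    have heq : Uᴴ * (M - 1) * U = Matrix.diagonal (fun i => ev i - 1) := by
      show star U * (M - 1) * U = _
      rw [Matrix.mul_sub, Matrix.sub_mul, Matrix.mul_one, hdiag, hUU]
      ext a b
      by_cases h : a = b <;> simp [Matrix.diagonal_apply, Matrix.one_apply, h]
    rw [heq] at hps
    have := Matrix.posSemidef_diagonal_iff.mp hps i
    linarith
  have hev2 : ∀ i, ev i ≤ lam := by
    intro i
    have hps : (Uᴴ * (lam • (1 : Matrix (Fin n) (Fin n) ℝ) - M) * U).PosSemidef :=
      h2.conjTranspose_mul_mul_same U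
    have heq : Uᴴ * (lam • (1 : Matrix (Fin n) (Fin n) ℝ) - M) * U
        = Matrix.diagonal (fun i => lam - ev i) := by
      show star U * (lam • (1 : Matrix (Fin n) (Fin n) ℝ) - M) * U = _
      rw [Matrix.mul_sub, Matrix.sub_mul, Matrix.mul_smul, Matrix.smul_mul, Matrix.mul_one,
        hdiag, hUU]
      ext a b
      by_cases h : a = b <;> simp [Matrix.diagonal_apply, Matrix.one_apply, h]
    rw [heq] at hps
    have := Matrix.posSemidef_diagonal_iff.mp hps i
    linarith
  have hinv : M⁻¹ = U * Matrix.diagonal (fun i => (ev i)⁻¹) * star U := by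
    apply Matrix.inv_eq_right_inv
    conv_lhs => rw [hspec]
    calc U * Matrix.diagonal ev * star U * (U * Matrix.diagonal (fun i => (ev i)⁻¹) * star U)
        = U * (Matrix.diagonal ev * ((star U * U) * Matrix.diagonal (fun i => (ev i)⁻¹))) * star U := by
          simp only [Matrix.mul_assoc]
    _ = U * (Matrix.diagonal ev * Matrix.diagonal (fun i => (ev i)⁻¹)) * star U := by
          rw [hUU, Matrix.one_mul]
    _ = 1 := by
          rw [Matrix.diagonal_mul_diagonal]
          have : (fun i => ev i * (ev i)⁻¹) = fun _ => (1:ℝ) := by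
            funext i; exact mul_inv_cancel₀ (hev0 i).ne'
          rw [this, Matrix.diagonal_one, Matrix.mul_one, hUU']
  set g : Fin n → ℝ := fun i => lam + 1 - ev i - lam * (ev i)⁻¹ with hg
  have hgnn : ∀ i, 0 ≤ g i := by
    intro i
    have he0 := hev0 i
    have he1 := hev1 i
    have he2 := hev2 i
    have hc : ev i * (ev i)⁻¹ = 1 := mul_inv_cancel₀ he0.ne'
    have hq : 0 < (ev i)⁻¹ := inv_pos.mpr he0
    have hprod : 0 ≤ (ev i - 1) * (lam - ev i) :=
      mul_nonneg (by linarith) (by linarith)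
    simp only [hg]
    nlinarith [mul_pos he0 hq]
  have hN : (lam + 1) • (1 : Matrix (Fin n) (Fin n) ℝ) - M - lam • M⁻¹
      = U * Matrix.diagonal g * star U := by
    rw [hinv]
    conv_lhs => rw [hspec]
    have h1' : (lam + 1) • (1 : Matrix (Fin n) (Fin n) ℝ)
        = U * ((lam + 1) • (1 : Matrix (Fin n) (Fin n) ℝ)) * star U := by
      rw [Matrix.mul_smul, Matrix.smul_mul, Matrix.mul_one, hUU']
    rw [h1']
    rw [show lam • (U * Matrix.diagonal (fun i => (ev i)⁻¹) * star U)
        = U * (lam • Matrix.diagonal (fun i => (ev i)⁻¹)) * star U by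
      rw [Matrix.mul_smul, Matrix.smul_mul]]
    rw [← Matrix.sub_mul, ← Matrix.mul_sub, ← Matrix.sub_mul, ← Matrix.mul_sub]
    congr 2
    ext a b
    by_cases h : a = b <;>
      simp [Matrix.diagonal_apply, Matrix.one_apply, h, hg]
  rw [hN]
  exact (Matrix.PosSemidef.diagonal (fun i => hgnn i)).mul_mul_conjTranspose_same U

private lemma stmt18_det {m : ℕ} (M : Matrix (Fin (m+1)) (Fin (m+1)) ℝ) (hpd : M.PosDef)
    (j : Fin (m+1)) :
    (M.submatrix (fun i : (Finset.univ.erase j) => (i : Fin (m+1)))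
      (fun i : (Finset.univ.erase j) => (i : Fin (m+1)))).det = M⁻¹ j j * M.det := by
  have hrange : ∀ x : Fin (m+1), x ∈ Set.range j.succAbove ↔ x ∈ Finset.univ.erase j := by
    intro x
    rw [Fin.range_succAbove]
    simp [Finset.mem_erase]
  let e : Fin m ≃ {x // x ∈ Finset.univ.erase j} :=
    (Equiv.ofInjective _ (Fin.succAbove_right_injective (p := j))).trans
      (Equiv.subtypeEquivRight hrange)
  have hdet1 : (M.submatrix (fun i : (Finset.univ.erase j) => (i : Fin (m+1)))
      (fun i : (Finset.univ.erase j) => (i : Fin (m+1)))).det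
      = (M.submatrix j.succAbove j.succAbove).det := by
    rw [← Matrix.det_submatrix_equiv_self e, Matrix.submatrix_submatrix]
    rfl
  have hadj : M.adjugate j j = (M.submatrix j.succAbove j.succAbove).det := by
    rw [Matrix.adjugate_fin_succ_eq_det_submatrix]
    have : ((-1 : ℝ)) ^ ((j : ℕ) + (j : ℕ)) = 1 := Even.neg_one_pow ⟨j, rfl⟩
    rw [this, one_mul]
  have hinvdef : M⁻¹ j j = (M.det)⁻¹ * M.adjugate j j := by
    rw [Matrix.inv_def]
    simp [Ring.inverse_eq_inv']
  have hdet : M.det ≠ 0 := hpd.det_pos.ne'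
  rw [hdet1, ← hadj, hinvdef]
  field_simp

end Aux

/-- Curvature bound for maximum entropy sampling: if `M` is real symmetric positive definite
with `I ⪯ M ⪯ λ·I` for some `λ ≥ 1`, then for every index `j`,
`ln det M - ln det M[X∖{j}, X∖{j}] ≥ (1/λ)·ln M_{jj}`; consequently, the set function
`f(S) = ln det M[S,S]` has total curvature at most `1 - 1/λ`. -/
theorem stmt_18 {n : ℕ} (lam : ℝ) (hlam : 1 ≤ lam)
    (M : Matrix (Fin n) (Fin n) ℝ) (hpd : M.PosDef)
    (h1 : (M - 1).PosSemidef)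
    (h2 : (lam • (1 : Matrix (Fin n) (Fin n) ℝ) - M).PosSemidef)
    (f : Finset (Fin n) → ℝ)
    (hf : ∀ S : Finset (Fin n),
      f S = Real.log (M.submatrix (fun i : S => (i : Fin n)) (fun i : S => (i : Fin n))).det) :
    ∀ j : Fin n,
      (1 / lam) * Real.log (M j j) ≤
        Real.log M.det -
          Real.log (M.submatrix (fun i : (Finset.univ.erase j) => (i : Fin n))
            (fun i : (Finset.univ.erase j) => (i : Fin n))).det ∧
      (1 - (1 - 1 / lam)) * (f {j} - f ∅) ≤
        f Finset.univ - f (Finset.univ.erase j) := by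
  intro j
  obtain ⟨m, rfl⟩ : ∃ m, n = m + 1 := ⟨n - 1, by have := j.pos; omega⟩
  -- diagonal entry bounds
  have hd1 : 1 ≤ M j j := by
    have := h1.dotProduct_mulVec_nonneg (Pi.single j 1)
    simp [dotProduct, Matrix.mulVec, Pi.single_apply, Matrix.one_apply,
      Finset.sum_ite_eq, Matrix.sub_apply] at this
    linarith
  have hp : 0 < M⁻¹ j j := by
    have := hpd.inv.dotProduct_mulVec_pos (x := Pi.single j 1) (by intro h; have := congrFun h j; simp at this)
    simpa [dotProduct, Matrix.mulVec, Pi.single_apply, Finset.sum_ite_eq] using this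
  -- key inequality from the PSD matrix (λ+1)•1 - M - λ•M⁻¹
  have hkey : lam * (M⁻¹ j j) ≤ lam + 1 - M j j := by
    have hN := stmt18_psd lam M hpd h1 h2
    have := hN.dotProduct_mulVec_nonneg (Pi.single j 1)
    simp [dotProduct, Matrix.mulVec, Pi.single_apply, Matrix.one_apply,
      Finset.sum_ite_eq, Matrix.sub_apply, Matrix.smul_apply, smul_eq_mul] at this
    linarith
  have hdetpos : (0:ℝ) < M.det := hpd.det_pos
  have hdetmin := stmt18_det M hpd j
  have hlogmin : Real.log (M.submatrix (fun i : (Finset.univ.erase j) => (i : Fin (m+1)))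
      (fun i : (Finset.univ.erase j) => (i : Fin (m+1)))).det
      = Real.log (M⁻¹ j j) + Real.log M.det := by
    rw [hdetmin, Real.log_mul hp.ne' hdetpos.ne']
  have hmain : (1 / lam) * Real.log (M j j) ≤
      Real.log M.det -
        Real.log (M.submatrix (fun i : (Finset.univ.erase j) => (i : Fin (m+1)))
          (fun i : (Finset.univ.erase j) => (i : Fin (m+1)))).det := by
    rw [hlogmin]
    have := stmt18_scalar hlam hd1 hp hkey
    linarith
  refine ⟨hmain, ?_⟩
  -- the f-version
  have hfuniv : f Finset.univ = Real.log M.det := by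
    rw [hf]
    congr 1
    exact Matrix.det_submatrix_equiv_self
      (⟨fun x => x.1, fun x => ⟨x, Finset.mem_univ x⟩, fun _ => rfl, fun _ => rfl⟩ :
        {x // x ∈ (Finset.univ : Finset (Fin (m+1)))} ≃ Fin (m+1)) M
  have hfempty : f ∅ = 0 := by
    rw [hf]
    haveI : IsEmpty {x // x ∈ (∅ : Finset (Fin (m+1)))} := Finset.isEmpty_coe_sort.mpr rfl
    rw [Matrix.det_isEmpty, Real.log_one]
  have hfsingle : f {j} = Real.log (M j j) := by
    rw [hf]
    haveI : Unique {x // x ∈ ({j} : Finset (Fin (m+1)))} :=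
      ⟨⟨⟨j, Finset.mem_singleton_self j⟩⟩, fun x => Subtype.ext (Finset.mem_singleton.mp x.2)⟩
    have hdef : ((default : {x // x ∈ ({j} : Finset (Fin (m+1)))}) : Fin (m+1)) = j :=
      Finset.mem_singleton.mp (Subtype.prop _)
    rw [Matrix.det_unique, Matrix.submatrix_apply, hdef]
  rw [hfuniv, hfempty, hfsingle, hf (Finset.univ.erase j)]
  have h110 : 1 - (1 - 1 / lam) = 1 / lam := by ring
  rw [h110, sub_zero]
  exact hmain
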